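/- Let Φ be an irreducible simply-laced crystallographic root system and α a positive root. Then ht(α) − 1 equals the number of unordered pairs {β₁, β₂} of distinct positive roots with α = β₁ + β₂. -/

import Mathlib

open Finset Submodule
open scoped Classical

/-- A (reduced) crystallographic root system in the Euclidean space `ℝⁿ`,
together with a chosen simple system `Δ` and the corresponding positive
roots `Pos`, and the (nonnegative integer) coordinates `coeff β a` of a
positive root `β` with respect to the simple roots. -/
structure CRS (n : ℕ) where
  Φ : Finset (EuclideanSpace ℝ (Fin n))
  Δ : Finset (EuclideanSpace ℝ (Fin n))
  Pos : Finset (EuclideanSpace ℝ (Fin n))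
  coeff : EuclideanSpace ℝ (Fin n) → EuclideanSpace ℝ (Fin n) → ℕ
  zero_notmem : (0 : EuclideanSpace ℝ (Fin n)) ∉ Φ
  span_top : Submodule.span ℝ (Φ : Set (EuclideanSpace ℝ (Fin n))) = ⊤
  Δ_sub : Δ ⊆ Pos
  Pos_sub : Pos ⊆ Φ
  neg_mem : ∀ α ∈ Φ, -α ∈ Φ
  pos_or_neg : ∀ α ∈ Φ, α ∈ Pos ∨ -α ∈ Pos
  not_pos_and_neg : ∀ α ∈ Pos, -α ∉ Pos
  reduced : ∀ α ∈ Φ, ∀ c : ℝ, c • α ∈ Φ → c = 1 ∨ c = -1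
  reflect_mem : ∀ α ∈ Φ, ∀ β ∈ Φ,
    β - ((2 * inner ℝ α β / inner ℝ α α : ℝ)) • α ∈ Φ
  cartan_int : ∀ α ∈ Φ, ∀ β ∈ Φ, ∃ z : ℤ, (2 * inner ℝ α β / inner ℝ α α : ℝ) = z
  Δ_indep : LinearIndependent ℝ (fun a : Δ => (a : EuclideanSpace ℝ (Fin n)))
  pos_eq_sum : ∀ β ∈ Pos, β = ∑ a ∈ Δ, (coeff β a : ℝ) • a

namespace CRS

variable {n : ℕ}

/-- The height of a positive root: the sum of its coordinates over `Δ`. -/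
def ht (R : CRS n) (β : EuclideanSpace ℝ (Fin n)) : ℕ := ∑ a ∈ R.Δ, R.coeff β a

/-- The root order: `rle β α` means `β ≤ α`, i.e. `α - β` is a nonnegative
integer combination of the simple roots. -/
def rle (R : CRS n) (β α : EuclideanSpace ℝ (Fin n)) : Prop :=
  ∃ c : EuclideanSpace ℝ (Fin n) → ℕ, α - β = ∑ a ∈ R.Δ, (c a : ℝ) • a

/-- An ideal of the positive root poset: a downward closed set of positive roots. -/
def IsIdeal (R : CRS n) (I : Finset (EuclideanSpace ℝ (Fin n))) : Prop :=
  I ⊆ R.Pos ∧ ∀ α ∈ I, ∀ β ∈ R.Pos, R.rle β α → β ∈ I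

/-- Irreducibility: the simple system cannot be split into two nonempty
mutually orthogonal parts. -/
def Irred (R : CRS n) : Prop :=
  ∀ s t : Finset (EuclideanSpace ℝ (Fin n)), s ∪ t = R.Δ → Disjoint s t →
    (∀ a ∈ s, ∀ b ∈ t, (inner ℝ a b : ℝ) = 0) → s = ∅ ∨ t = ∅

/-- The positive roots of the localized root system `Φ_X = Φ ∩ X^⊥`. -/
noncomputable def PosIn (R : CRS n) (X : Submodule ℝ (EuclideanSpace ℝ (Fin n))) :
    Finset (EuclideanSpace ℝ (Fin n)) :=
  R.Pos.filter (fun β => β ∈ Xᗮ)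

end CRS

/-- The hyperplane orthogonal to a root `β`. -/
noncomputable def H {n : ℕ} (β : EuclideanSpace ℝ (Fin n)) : Submodule ℝ (EuclideanSpace ℝ (Fin n)) :=
  (ℝ ∙ β)ᗮ

/-- The simple system (the indecomposable elements) of a positive system `P`. -/
noncomputable def simpleOf {n : ℕ} (P : Finset (EuclideanSpace ℝ (Fin n))) :
    Finset (EuclideanSpace ℝ (Fin n)) :=
  P.filter (fun γ => ¬ ∃ β₁ ∈ P, ∃ β₂ ∈ P, γ = β₁ + β₂)

/-- The condition that `s` is an unordered pair `{β₁, β₂}` of distinct vectors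
with `α = β₁ + β₂`. -/
def pairSumCond {n : ℕ} (α : EuclideanSpace ℝ (Fin n))
    (s : Finset (EuclideanSpace ℝ (Fin n))) : Prop :=
  ∃ β₁ β₂ : EuclideanSpace ℝ (Fin n), β₁ ≠ β₂ ∧ s = {β₁, β₂} ∧ α = β₁ + β₂


namespace CRSAux
open CRS
variable {n : ℕ}

lemma sum_indep (R : CRS n) (g : EuclideanSpace ℝ (Fin n) → ℝ)
    (h : ∑ a ∈ R.Δ, g a • a = 0) : ∀ a ∈ R.Δ, g a = 0 := by
  intro a ha
  have h2 := linearIndependent_iff'.mp R.Δ_indep Finset.univ (fun x => g x.1)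
  have h3 : ∑ x : R.Δ, g x.1 • (x.1 : EuclideanSpace ℝ (Fin n)) = 0 := by
    rw [Finset.sum_coe_sort R.Δ (fun a => g a • a)]; exact h
  exact h2 h3 ⟨a, ha⟩ (Finset.mem_univ _)

lemma root_ne_zero (R : CRS n) {β : EuclideanSpace ℝ (Fin n)} (h : β ∈ R.Φ) : β ≠ 0 :=
  fun e => R.zero_notmem (e ▸ h)

lemma inner_self_pos' (R : CRS n) {β : EuclideanSpace ℝ (Fin n)} (h : β ∈ R.Φ) :
    (0:ℝ) < inner ℝ β β := by
  have h1 : (0:ℝ) < ‖β‖ := norm_pos_iff.mpr (root_ne_zero R h)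
  rw [real_inner_self_eq_norm_sq]
  positivity

lemma coeff_unique (R : CRS n) {β : EuclideanSpace ℝ (Fin n)} (hβ : β ∈ R.Pos)
    (f : EuclideanSpace ℝ (Fin n) → ℝ) (hf : β = ∑ a ∈ R.Δ, f a • a) :
    ∀ a ∈ R.Δ, f a = R.coeff β a := by
  intro a ha
  have h0 : ∑ b ∈ R.Δ, (f b - R.coeff β b) • b = 0 := by
    simp only [sub_smul, Finset.sum_sub_distrib]
    rw [← hf, ← R.pos_eq_sum β hβ, sub_self]
  have := sum_indep R _ h0 a ha
  linarith

lemma ht_pos (R : CRS n) {β : EuclideanSpace ℝ (Fin n)} (h : β ∈ R.Pos) : 1 ≤ R.ht β := by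
  by_contra hc
  have h0 : R.ht β = 0 := by omega
  have hz : ∀ a ∈ R.Δ, R.coeff β a = 0 := by
    intro a ha
    exact (Finset.sum_eq_zero_iff.mp h0) a ha
  have : β = 0 := by
    rw [R.pos_eq_sum β h]
    apply Finset.sum_eq_zero
    intro a ha; rw [hz a ha]; simp
  exact root_ne_zero R (R.Pos_sub h) this

lemma coeff_add (R : CRS n) {β γ : EuclideanSpace ℝ (Fin n)} (hβ : β ∈ R.Pos)
    (hγ : γ ∈ R.Pos) (hs : β + γ ∈ R.Pos) :
    ∀ a ∈ R.Δ, R.coeff (β + γ) a = R.coeff β a + R.coeff γ a := by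
  intro a ha
  have h1 : β + γ = ∑ b ∈ R.Δ, ((R.coeff β b : ℝ) + R.coeff γ b) • b := by
    simp only [add_smul, Finset.sum_add_distrib]
    rw [← R.pos_eq_sum β hβ, ← R.pos_eq_sum γ hγ]
  have := coeff_unique R hs _ h1 a ha
  exact_mod_cast this.symm

lemma ht_add (R : CRS n) {β γ : EuclideanSpace ℝ (Fin n)} (hβ : β ∈ R.Pos)
    (hγ : γ ∈ R.Pos) (hs : β + γ ∈ R.Pos) : R.ht (β + γ) = R.ht β + R.ht γ := by
  unfold CRS.ht
  rw [← Finset.sum_add_distrib]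
  exact Finset.sum_congr rfl (coeff_add R hβ hγ hs)

lemma ht_simple (R : CRS n) {a : EuclideanSpace ℝ (Fin n)} (ha : a ∈ R.Δ) : R.ht a = 1 := by
  have h1 : a = ∑ b ∈ R.Δ, (if b = a then (1:ℝ) else 0) • b := by
    rw [Finset.sum_congr rfl (fun b _ => ?_), Finset.sum_ite_eq' R.Δ a id]
    · simp [ha]
    · split <;> simp_all
  have h2 := coeff_unique R (R.Δ_sub ha) _ h1
  have h3 : ∀ b ∈ R.Δ, R.coeff a b = if b = a then 1 else 0 := by
    intro b hb
    have h4 := (h2 b hb).symm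
    by_cases hba : b = a
    · rw [if_pos hba] at h4 ⊢; exact_mod_cast h4
    · rw [if_neg hba] at h4 ⊢; exact_mod_cast h4
  unfold CRS.ht
  rw [Finset.sum_congr rfl h3, Finset.sum_ite_eq' R.Δ a (fun _ => 1)]
  simp [ha]

end CRSAux

namespace CRSAux
variable {n : ℕ}

lemma inner_self_eq (R : CRS n) (hsl : ∀ α ∈ R.Φ, ∀ β ∈ R.Φ, ‖α‖ = ‖β‖)
    {β γ : EuclideanSpace ℝ (Fin n)} (hβ : β ∈ R.Φ) (hγ : γ ∈ R.Φ) :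
    (inner ℝ β β : ℝ) = inner ℝ γ γ := by
  rw [real_inner_self_eq_norm_sq, real_inner_self_eq_norm_sq, hsl β hβ γ hγ]

lemma cartan_abs_le (R : CRS n) (hsl : ∀ α ∈ R.Φ, ∀ β ∈ R.Φ, ‖α‖ = ‖β‖)
    {a β : EuclideanSpace ℝ (Fin n)} (ha : a ∈ R.Φ) (hβ : β ∈ R.Φ) :
    |2 * (inner ℝ a β : ℝ) / inner ℝ a a| ≤ 2 := by
  have hκ : (0:ℝ) < inner ℝ a a := inner_self_pos' R ha
  have h1 : |(inner ℝ a β : ℝ)| ≤ inner ℝ a a := by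
    calc |(inner ℝ a β : ℝ)| ≤ ‖a‖ * ‖β‖ := abs_real_inner_le_norm a β
    _ = ‖a‖ * ‖a‖ := by rw [hsl β hβ a ha]
    _ = inner ℝ a a := by rw [real_inner_self_eq_norm_sq]; ring
  rw [abs_div, abs_of_pos hκ, div_le_iff₀ hκ, abs_mul, abs_two]
  linarith

lemma eq_of_cartan_two (R : CRS n) (hsl : ∀ α ∈ R.Φ, ∀ β ∈ R.Φ, ‖α‖ = ‖β‖)
    {a β : EuclideanSpace ℝ (Fin n)} (ha : a ∈ R.Φ) (hβ : β ∈ R.Φ)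
    (h : 2 * (inner ℝ a β : ℝ) / inner ℝ a a = 2) : β = a := by
  have hκ : (0:ℝ) < inner ℝ a a := inner_self_pos' R ha
  have h1 : (inner ℝ a β : ℝ) = inner ℝ a a := by
    have := (div_eq_iff (ne_of_gt hκ)).mp h
    linarith
  have h2 : (inner ℝ β β : ℝ) = inner ℝ a a := inner_self_eq R hsl hβ ha
  have h0 : (inner ℝ (β - a) (β - a) : ℝ) = 0 := by
    simp only [inner_sub_left, inner_sub_right]
    rw [real_inner_comm β a] at *
    linarith [real_inner_comm β a]
  have := inner_self_eq_zero.mp h0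
  exact sub_eq_zero.mp this

lemma cartan_one (R : CRS n) (hsl : ∀ α ∈ R.Φ, ∀ β ∈ R.Φ, ‖α‖ = ‖β‖)
    {a β : EuclideanSpace ℝ (Fin n)} (ha : a ∈ R.Φ) (hβ : β ∈ R.Φ)
    (hpos : 0 < (inner ℝ a β : ℝ)) (hne : β ≠ a) :
    2 * (inner ℝ a β : ℝ) / inner ℝ a a = 1 := by
  have hκ : (0:ℝ) < inner ℝ a a := inner_self_pos' R ha
  obtain ⟨z, hz⟩ := R.cartan_int a ha β hβ
  have habs := cartan_abs_le R hsl ha hβ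
  rw [hz] at habs
  have h2 : z ≤ 2 := by exact_mod_cast (abs_le.mp habs).2
  have h0 : (0:ℝ) < z := by rw [← hz]; positivity
  have h0' : 0 < z := by exact_mod_cast h0
  have hz2 : z ≠ 2 := by
    intro hzz
    apply hne
    apply eq_of_cartan_two R hsl ha hβ
    rw [hz, hzz]; norm_num
  have : z = 1 := by omega
  rw [hz, this]; norm_num

lemma root_sub (R : CRS n) (hsl : ∀ α ∈ R.Φ, ∀ β ∈ R.Φ, ‖α‖ = ‖β‖)
    {a β : EuclideanSpace ℝ (Fin n)} (ha : a ∈ R.Φ) (hβ : β ∈ R.Φ)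
    (hpos : 0 < (inner ℝ a β : ℝ)) (hne : β ≠ a) : β - a ∈ R.Φ := by
  have h := R.reflect_mem a ha β hβ
  rwa [cartan_one R hsl ha hβ hpos hne, one_smul] at h

lemma pos_of_sub_smul (R : CRS n) {a β : EuclideanSpace ℝ (Fin n)} (ha : a ∈ R.Δ)
    (hβ : β ∈ R.Pos) (hne : β ≠ a) {c : ℝ} (hΦ : β - c • a ∈ R.Φ) : β - c • a ∈ R.Pos := by
  rcases R.pos_or_neg _ hΦ with h | h
  · exact h
  · exfalso
    set γ := β - c • a with hγ
    have hsum : ∑ b ∈ R.Δ, ((R.coeff β b : ℝ) + (R.coeff (-γ) b : ℝ)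
        - (if b = a then c else 0)) • b = 0 := by
      simp only [add_smul, sub_smul, Finset.sum_add_distrib, Finset.sum_sub_distrib]
      rw [← R.pos_eq_sum β hβ, ← R.pos_eq_sum (-γ) h]
      have hite : ∑ b ∈ R.Δ, (if b = a then c else 0) • b = c • a := by
        rw [Finset.sum_congr rfl (fun b _ => ?_), Finset.sum_ite_eq' R.Δ a (fun b => c • b)]
        · simp [ha]
        · split <;> simp_all
      rw [hite, hγ]
      abel
    have hall := sum_indep R _ hsum
    have hcoeffzero : ∀ b ∈ R.Δ, b ≠ a → R.coeff β b = 0 := by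
      intro b hb hba
      have := hall b hb
      rw [if_neg hba] at this
      have h1 : (R.coeff β b : ℝ) + (R.coeff (-γ) b : ℝ) = 0 := by linarith
      have h2 : R.coeff β b + R.coeff (-γ) b = 0 := by exact_mod_cast h1
      omega
    have hβa : β = (R.coeff β a : ℝ) • a := by
      conv_lhs => rw [R.pos_eq_sum β hβ]
      exact Finset.sum_eq_single a (fun b hb hba => by rw [hcoeffzero b hb hba]; simp)
        (fun hh => absurd ha hh)
    have hred := R.reduced a (R.Pos_sub (R.Δ_sub ha)) (R.coeff β a)
        (by rw [← hβa]; exact R.Pos_sub hβ)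
    rcases hred with h1 | h1
    · apply hne; rw [hβa, h1, one_smul]
    · have : (0:ℝ) ≤ (R.coeff β a : ℝ) := by positivity
      linarith
  
lemma exists_simple_inner_pos (R : CRS n) {α : EuclideanSpace ℝ (Fin n)} (hα : α ∈ R.Pos) :
    ∃ a ∈ R.Δ, 0 < (inner ℝ a α : ℝ) := by
  by_contra hc
  push_neg at hc
  have h1 : (0:ℝ) < inner ℝ α α := inner_self_pos' R (R.Pos_sub hα)
  have h2 : (inner ℝ α α : ℝ) = ∑ b ∈ R.Δ, (R.coeff α b : ℝ) * inner ℝ b α := by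
    conv_lhs => rw [show (inner ℝ α α : ℝ) = inner ℝ (∑ a ∈ R.Δ, (R.coeff α a : ℝ) • a) α from by
      rw [← R.pos_eq_sum α hα]]
    rw [sum_inner]
    exact Finset.sum_congr rfl (fun b _ => real_inner_smul_left b α _)
  have h3 : (inner ℝ α α : ℝ) ≤ 0 := by
    rw [h2]
    apply Finset.sum_nonpos
    intro b hb
    exact mul_nonpos_of_nonneg_of_nonpos (by positivity) (hc b hb)
  linarith

end CRSAux

namespace CRSAux
variable {n : ℕ}

noncomputable def refl (a β : EuclideanSpace ℝ (Fin n)) : EuclideanSpace ℝ (Fin n) :=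
  β - ((2 * inner ℝ a β / inner ℝ a a : ℝ)) • a

lemma refl_add (a β γ : EuclideanSpace ℝ (Fin n)) :
    refl a (β + γ) = refl a β + refl a γ := by
  unfold refl
  rw [inner_add_right]
  rw [show (2 * ((inner ℝ a β : ℝ) + inner ℝ a γ) / inner ℝ a a)
      = 2 * (inner ℝ a β : ℝ) / inner ℝ a a + 2 * (inner ℝ a γ : ℝ) / inner ℝ a a from by ring]
  rw [add_smul]
  abel

lemma refl_sub (a β γ : EuclideanSpace ℝ (Fin n)) :
    refl a (β - γ) = refl a β - refl a γ := by
  unfold refl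
  rw [inner_sub_right]
  rw [show (2 * ((inner ℝ a β : ℝ) - inner ℝ a γ) / inner ℝ a a)
      = 2 * (inner ℝ a β : ℝ) / inner ℝ a a - 2 * (inner ℝ a γ : ℝ) / inner ℝ a a from by ring]
  rw [sub_smul]
  abel

lemma refl_self (a : EuclideanSpace ℝ (Fin n)) (hκ : (inner ℝ a a : ℝ) ≠ 0) :
    refl a a = -a := by
  unfold refl
  rw [show (2 * (inner ℝ a a : ℝ) / inner ℝ a a) = 2 from by rw [mul_div_assoc, div_self hκ, mul_one], two_smul]
  abel

lemma refl_invol (a : EuclideanSpace ℝ (Fin n)) (hκ : (inner ℝ a a : ℝ) ≠ 0)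
    (β : EuclideanSpace ℝ (Fin n)) : refl a (refl a β) = β := by
  have h1 : (inner ℝ a (refl a β) : ℝ) = - inner ℝ a β := by
    unfold refl
    rw [inner_sub_right, real_inner_smul_right, div_mul_cancel₀ _ hκ]
    ring
  have h2 : refl a (refl a β)
      = refl a β - ((2 * (inner ℝ a (refl a β)) / inner ℝ a a : ℝ)) • a := rfl
  rw [h2, h1, show (2 * (-(inner ℝ a β : ℝ)) / inner ℝ a a)
      = -(2 * (inner ℝ a β : ℝ) / inner ℝ a a) from by ring, neg_smul]
  unfold refl
  abel

lemma refl_pos (R : CRS n) {a β : EuclideanSpace ℝ (Fin n)} (ha : a ∈ R.Δ)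
    (hβ : β ∈ R.Pos) (hne : β ≠ a) : refl a β ∈ R.Pos :=
  pos_of_sub_smul R ha hβ hne (R.reflect_mem a (R.Pos_sub (R.Δ_sub ha)) β (R.Pos_sub hβ))

lemma card_step (R : CRS n) (hsl : ∀ α ∈ R.Φ, ∀ β ∈ R.Φ, ‖α‖ = ‖β‖)
    {α a : EuclideanSpace ℝ (Fin n)} (hα : α ∈ R.Pos) (ha : a ∈ R.Δ)
    (hinner : 0 < (inner ℝ a α : ℝ)) (hne : α ≠ a) :
    ((R.Pos.powersetCard 2).filter (pairSumCond α)).card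
      = ((R.Pos.powersetCard 2).filter (pairSumCond (α - a))).card + 1 := by
  classical
  have haΦ : a ∈ R.Φ := R.Pos_sub (R.Δ_sub ha)
  have hαΦ : α ∈ R.Φ := R.Pos_sub hα
  have hκ : (0:ℝ) < inner ℝ a a := inner_self_pos' R haΦ
  have hκ' : (inner ℝ a a : ℝ) ≠ 0 := ne_of_gt hκ
  have hc1 : 2 * (inner ℝ a α : ℝ) / inner ℝ a a = 1 := cartan_one R hsl haΦ hαΦ hinner hne
  set σ : EuclideanSpace ℝ (Fin n) → EuclideanSpace ℝ (Fin n) := refl a with hσ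
  have σinv : ∀ β, σ (σ β) = β := refl_invol a hκ'
  have σadd : ∀ x y, σ (x + y) = σ x + σ y := fun x y => refl_add a x y
  have σsub : ∀ x y, σ (x - y) = σ x - σ y := fun x y => refl_sub a x y
  have σself : σ a = -a := refl_self a hκ'
  have σinj : Function.Injective σ := Function.LeftInverse.injective σinv
  have hreflα : σ α = α - a := by
    rw [hσ]; unfold refl; rw [hc1, one_smul]
  have hα'Pos : α - a ∈ R.Pos := by
    have h := pos_of_sub_smul R ha hα hne (c := (1:ℝ))
      (by rw [one_smul]; exact root_sub R hsl haΦ hαΦ hinner hne)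
    rwa [one_smul] at h
  have hane : a ≠ α - a := by
    intro h
    have h2 : α = (2:ℝ) • a := by rw [two_smul]; exact sub_eq_iff_eq_add.mp h.symm
    rcases R.reduced a haΦ 2 (h2 ▸ hαΦ) with h3 | h3 <;> norm_num at h3
  have h2x : 2 * (inner ℝ a α : ℝ) = inner ℝ a a := by
    have h := hc1
    rw [div_eq_iff hκ'] at h
    linarith
  have hnot_a : ∀ δ ∈ R.Pos, ∀ ε ∈ R.Pos, δ + ε = α - a → δ ≠ a := by
    intro δ hδ ε hε hsum hδa
    have hεΦ : ε ∈ R.Φ := R.Pos_sub hε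
    have hεval : ε = α - a - a := by rw [← hsum, hδa]; abel
    have hinner_ε : (inner ℝ a ε : ℝ) = inner ℝ a α - 2 * inner ℝ a a := by
      rw [hεval, inner_sub_right, inner_sub_right]; ring
    have habs := cartan_abs_le R hsl haΦ hεΦ
    rw [hinner_ε, show (2 * ((inner ℝ a α : ℝ) - 2 * inner ℝ a a) / inner ℝ a a) = -3 from by
      rw [div_eq_iff hκ']; linarith] at habs
    norm_num at habs
  -- membership helpers
  have memP : ∀ (x β γ : EuclideanSpace ℝ (Fin n)), β ≠ γ → β ∈ R.Pos → γ ∈ R.Pos →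
      x = β + γ → ({β, γ} : Finset (EuclideanSpace ℝ (Fin n)))
        ∈ (R.Pos.powersetCard 2).filter (pairSumCond x) := by
    intro x β γ h1 h2 h3 h4
    rw [Finset.mem_filter, Finset.mem_powersetCard]
    refine ⟨⟨?_, Finset.card_pair h1⟩, β, γ, h1, rfl, h4⟩
    intro y hy
    rcases Finset.mem_insert.mp hy with h | h
    · rwa [h]
    · rw [Finset.mem_singleton.mp h]; exact h3
  have elimP : ∀ (x : EuclideanSpace ℝ (Fin n)),
      ∀ s ∈ (R.Pos.powersetCard 2).filter (pairSumCond x),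
      ∃ β γ, β ≠ γ ∧ β ∈ R.Pos ∧ γ ∈ R.Pos ∧ s = {β, γ} ∧ x = β + γ := by
    intro x s hs
    rw [Finset.mem_filter, Finset.mem_powersetCard] at hs
    obtain ⟨⟨hsub, _⟩, β, γ, h1, h2, h3⟩ := hs
    exact ⟨β, γ, h1, hsub (h2 ▸ Finset.mem_insert_self β {γ}),
      hsub (h2 ▸ Finset.mem_insert_of_mem (Finset.mem_singleton_self γ)), h2, h3⟩
  have himage_pair : ∀ β γ : EuclideanSpace ℝ (Fin n),
      ({β, γ} : Finset (EuclideanSpace ℝ (Fin n))).image σ = {σ β, σ γ} := by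
    intro β γ; simp [Finset.image_insert, Finset.image_singleton]
  set p₀ : Finset (EuclideanSpace ℝ (Fin n)) := {a, α - a} with hp₀def
  have hp₀ : p₀ ∈ (R.Pos.powersetCard 2).filter (pairSumCond α) :=
    memP α a (α - a) hane (R.Δ_sub ha) hα'Pos (by abel)
  have claim1 : (R.Pos.powersetCard 2).filter (pairSumCond α)
      = insert p₀ (((R.Pos.powersetCard 2).filter (pairSumCond (α - a))).image
          (fun s => s.image σ)) := by
    ext s
    constructor
    · intro hs
      obtain ⟨β, γ, h1, h2, h3, h4, h5⟩ := elimP α s hs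
      rw [Finset.mem_insert]
      by_cases hcase : β = a ∨ γ = a
      · left
        rcases hcase with h | h
        · rw [h4, h, show γ = α - a from by rw [h5, h]; abel]
        · rw [h4, h, show β = α - a from by rw [h5, h]; abel, Finset.pair_comm]
      · push_neg at hcase
        right
        rw [Finset.mem_image]
        refine ⟨s.image σ, ?_, ?_⟩
        · rw [h4, himage_pair]
          apply memP
          · exact fun h => h1 (σinj h)
          · exact refl_pos R ha h2 hcase.1
          · exact refl_pos R ha h3 hcase.2
          · rw [← σadd, ← h5, hreflα]
        · rw [Finset.image_image, show σ ∘ σ = id from funext σinv, Finset.image_id]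
    · intro hs
      rcases Finset.mem_insert.mp hs with h | h
      · rw [h]; exact hp₀
      · obtain ⟨t, ht, rfl⟩ := Finset.mem_image.mp h
        obtain ⟨δ, ε, h1, h2, h3, h4, h5⟩ := elimP (α - a) t ht
        have hδa : δ ≠ a := hnot_a δ h2 ε h3 h5.symm
        have hεa : ε ≠ a := hnot_a ε h3 δ h2 (by rw [add_comm]; exact h5.symm)
        rw [h4, himage_pair]
        apply memP
        · exact fun h => h1 (σinj h)
        · exact refl_pos R ha h2 hδa
        · exact refl_pos R ha h3 hεa
        · rw [← σadd, ← h5]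
          show α = refl a (α - a)
          rw [refl_sub, refl_self a hκ', show (refl a α : EuclideanSpace ℝ (Fin n)) = α - a from hreflα]
          abel
  have claim2 : p₀ ∉ ((R.Pos.powersetCard 2).filter (pairSumCond (α - a))).image
      (fun s => s.image σ) := by
    intro h
    obtain ⟨t, ht, hteq⟩ := Finset.mem_image.mp h
    have hat : a ∈ t.image σ := by rw [hteq]; exact Finset.mem_insert_self _ _
    obtain ⟨δ, hδ, hδeq⟩ := Finset.mem_image.mp hat
    have hδval : δ = -a := by
      have h2 := congrArg σ hδeq
      rwa [σinv, σself] at h2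
    rw [Finset.mem_filter, Finset.mem_powersetCard] at ht
    have hδPos : δ ∈ R.Pos := ht.1.1 hδ
    exact R.not_pos_and_neg a (R.Δ_sub ha) (hδval ▸ hδPos)
  rw [claim1, Finset.card_insert_of_notMem claim2,
    Finset.card_image_of_injOn (Finset.image_injective σinj).injOn]

end CRSAux

/-- in a simply-laced irreducible root system, `ht(α) - 1` equals
the number of unordered pairs `{β₁, β₂}` of distinct positive roots with
`α = β₁ + β₂`. -/
theorem height_sub_one_eq_card_sum_pairs {n : ℕ} (R : CRS n) (hirr : R.Irred)
    (hsl : ∀ α ∈ R.Φ, ∀ β ∈ R.Φ, ‖α‖ = ‖β‖)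
    (α : EuclideanSpace ℝ (Fin n)) (hα : α ∈ R.Pos) :
    R.ht α - 1 = ((R.Pos.powersetCard 2).filter (pairSumCond α)).card := by
  classical
  have key : ∀ m : ℕ, ∀ γ ∈ R.Pos, R.ht γ = m →
      R.ht γ - 1 = ((R.Pos.powersetCard 2).filter (pairSumCond γ)).card := by
    intro m
    induction m using Nat.strong_induction_on with
    | _ m ih =>
      intro γ hγ hm
      by_cases hone : R.ht γ = 1
      · rw [hone]
        symm
        rw [Finset.card_eq_zero, Finset.filter_eq_empty_iff]
        intro s hs hps
        obtain ⟨β₁, β₂, h1, h2, h3⟩ := hps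
        rw [Finset.mem_powersetCard] at hs
        have hb1 : β₁ ∈ R.Pos := hs.1 (h2 ▸ Finset.mem_insert_self β₁ {β₂})
        have hb2 : β₂ ∈ R.Pos :=
          hs.1 (h2 ▸ Finset.mem_insert_of_mem (Finset.mem_singleton_self β₂))
        have hadd := CRSAux.ht_add R hb1 hb2 (h3 ▸ hγ)
        rw [← h3] at hadd
        have hp1 := CRSAux.ht_pos R hb1
        have hp2 := CRSAux.ht_pos R hb2
        omega
      · have hge1 := CRSAux.ht_pos R hγ
        obtain ⟨a, ha, hac⟩ := CRSAux.exists_simple_inner_pos R hγ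
        have hne : γ ≠ a := by
          intro h
          rw [h, CRSAux.ht_simple R ha] at hone
          exact hone rfl
        have hstep := CRSAux.card_step R hsl hγ ha hac hne
        have haΦ := R.Pos_sub (R.Δ_sub ha)
        have hγΦ := R.Pos_sub hγ
        have hγ'Φ : γ - a ∈ R.Φ := CRSAux.root_sub R hsl haΦ hγΦ hac hne
        have hγ'Pos : γ - a ∈ R.Pos := by
          have h := CRSAux.pos_of_sub_smul R ha hγ hne (c := (1:ℝ)) (by rwa [one_smul])
          rwa [one_smul] at h
        have hht : R.ht γ = R.ht (γ - a) + 1 := by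
          have h := CRSAux.ht_add R hγ'Pos (R.Δ_sub ha) (by rwa [sub_add_cancel])
          rw [sub_add_cancel] at h
          rw [h, CRSAux.ht_simple R ha]
        have hlt : R.ht (γ - a) < m := by omega
        have hih := ih _ hlt (γ - a) hγ'Pos rfl
        have hp1 := CRSAux.ht_pos R hγ'Pos
        omega
  exact key (R.ht α) α hα rfl
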